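/- For real numbers a, b with b > a + 1 (and a, b such that the Gamma values are defined, e.g. a, b > 0), the infinite series ∑_{i=0}^∞ Γ(i+a)/Γ(i+b) converges and equals (1/(b-a-1)) · Γ(a)/Γ(b-1). -/
import Mathlib


open Real Filter Topology

private lemma gautschi_upper {x s : ℝ} (hx : 0 < x) (hs : 0 < s) (hs1 : s < 1) :
    Gamma x / Gamma (x + s) ≤ (x + s) ^ (1 - s) / x := by
  have hxs : 0 < x + s := by linarith
  have hG1 : 0 < Gamma x := Gamma_pos_of_pos hx
  have hG2 : 0 < Gamma (x + s) := Gamma_pos_of_pos hxs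
  -- log-convexity at x+1 = s*(x+s) + (1-s)*(x+s+1)
  have key : x * Gamma x ≤ Gamma (x + s) * (x + s) ^ (1 - s) := by
    have hconv := convexOn_log_Gamma.2 (Set.mem_Ioi.mpr hxs)
      (Set.mem_Ioi.mpr (by linarith : (0:ℝ) < x + s + 1)) hs.le (by linarith : (0:ℝ) ≤ 1 - s)
      (by ring)
    simp only [smul_eq_mul] at hconv
    have harg : s * (x + s) + (1 - s) * (x + s + 1) = x + 1 := by ring
    rw [harg] at hconv
    have hG3 : Gamma (x + s + 1) = (x + s) * Gamma (x + s) := Gamma_add_one hxs.ne'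
    have hG4 : Gamma (x + 1) = x * Gamma x := Gamma_add_one hx.ne'
    simp only [Function.comp_apply] at hconv
    rw [hG3, hG4, Real.log_mul hxs.ne' hG2.ne'] at hconv
    have : Real.log (x * Gamma x) ≤ Real.log (Gamma (x + s) * (x + s) ^ (1 - s)) := by
      rw [Real.log_mul hG2.ne' (rpow_pos_of_pos hxs _).ne', Real.log_rpow hxs]
      linarith
    have h1 : (0:ℝ) < x * Gamma x := mul_pos hx hG1
    exact (Real.log_le_log_iff h1 (mul_pos hG2 (rpow_pos_of_pos hxs _))).mp this
  rw [div_le_div_iff₀ hG2 hx]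
  calc Gamma x * x = x * Gamma x := by ring
    _ ≤ Gamma (x + s) * (x + s) ^ (1 - s) := key
    _ = (x + s) ^ (1 - s) * Gamma (x + s) := by ring

private lemma gamma_ratio_tendsto_zero {a c : ℝ} (ha : 0 < a) (hc : 0 < c) :
    Tendsto (fun i : ℕ => Gamma (i + a) / Gamma (i + a + c)) atTop (𝓝 0) := by
  set s : ℝ := min c (1/2) with hs_def
  have hs0 : 0 < s := lt_min hc (by norm_num)
  have hs1 : s < 1 := lt_of_le_of_lt (min_le_right _ _) (by norm_num)
  have hsc : s ≤ c := min_le_left _ _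
  -- upper bound sequence
  have hub : Tendsto (fun i : ℕ => ((i : ℝ) + a + s) ^ (1 - s) / ((i : ℝ) + a))
      atTop (𝓝 0) := by
    have hnat : Tendsto (fun i : ℕ => (i : ℝ) + a) atTop atTop :=
      tendsto_atTop_add_const_right _ _ tendsto_natCast_atTop_atTop
    have hnat2 : Tendsto (fun i : ℕ => (i : ℝ) + a + s) atTop atTop :=
      tendsto_atTop_add_const_right _ _ hnat
    have T2 : Tendsto (fun i : ℕ => ((i : ℝ) + a + s) ^ (-s)) atTop (𝓝 0) :=
      (tendsto_rpow_neg_atTop hs0).comp hnat2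
    have T1 : Tendsto (fun i : ℕ => ((i : ℝ) + a + s) / ((i : ℝ) + a)) atTop (𝓝 1) := by
      have h0 : Tendsto (fun i : ℕ => s / ((i : ℝ) + a)) atTop (𝓝 0) :=
        tendsto_const_nhds.div_atTop hnat
      have := h0.const_add 1
      rw [add_zero] at this
      refine this.congr' ?_
      filter_upwards [eventually_gt_atTop 0] with i _
      have hia : (0:ℝ) < (i : ℝ) + a := by positivity
      field_simp
    have := T1.mul T2
    rw [one_mul] at this
    refine this.congr' ?_
    filter_upwards [eventually_gt_atTop 0] with i _
    have hia : (0:ℝ) < (i : ℝ) + a := by positivity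
    have hias : (0:ℝ) < (i : ℝ) + a + s := by positivity
    have : ((i : ℝ) + a + s) ^ (1 - s) = ((i : ℝ) + a + s) * ((i : ℝ) + a + s) ^ (-s) := by
      rw [show (1:ℝ) - s = 1 + -s by ring, Real.rpow_add hias, Real.rpow_one]
    rw [div_mul_eq_mul_div, this]
  refine squeeze_zero' ?_ ?_ hub
  · filter_upwards with i
    exact div_nonneg (Gamma_pos_of_pos (by positivity)).le
      (Gamma_pos_of_pos (by positivity : (0:ℝ) < (i:ℝ) + a + c)).le
  · filter_upwards [eventually_ge_atTop 2] with i hi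
    have hia : (0:ℝ) < (i : ℝ) + a := by positivity
    have hi2 : (2:ℝ) ≤ (i : ℝ) := by exact_mod_cast hi
    have hmono : Gamma ((i : ℝ) + a + s) ≤ Gamma ((i : ℝ) + a + c) := by
      rcases eq_or_lt_of_le hsc with h | h
      · rw [h]
      · exact (Gamma_strictMonoOn_Ici (by simp only [Set.mem_Ici]; linarith)
          (by simp only [Set.mem_Ici]; linarith) (by linarith)).le
    calc Gamma ((i : ℝ) + a) / Gamma ((i : ℝ) + a + c)
        ≤ Gamma ((i : ℝ) + a) / Gamma ((i : ℝ) + a + s) := by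
          apply div_le_div_of_nonneg_left (Gamma_pos_of_pos hia).le
            (Gamma_pos_of_pos (by positivity)) hmono
      _ ≤ ((i : ℝ) + a + s) ^ (1 - s) / ((i : ℝ) + a) := gautschi_upper hia hs0 hs1

theorem gamma_ratio_tsum (a b : ℝ) (ha : 0 < a) (hb : 0 < b) (hab : b > a + 1) :
    HasSum (fun i : ℕ => Real.Gamma (i + a) / Real.Gamma (i + b))
      ((1 / (b - a - 1)) * (Real.Gamma a / Real.Gamma (b - 1))) := by
  set c : ℝ := b - a - 1 with hc_def
  have hc : 0 < c := by simp [hc_def]; linarith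
  set f : ℕ → ℝ := fun i => Gamma (i + a) / Gamma (i + b - 1) with hf_def
  have hb1 : (1:ℝ) < b := by linarith
  -- positivity facts
  have hGb1 : ∀ i : ℕ, (0:ℝ) < Gamma (i + b - 1) :=
    fun i => Gamma_pos_of_pos (by push_cast; linarith [Nat.cast_nonneg (α := ℝ) i])
  have hGa : ∀ i : ℕ, (0:ℝ) < Gamma (i + a) :=
    fun i => Gamma_pos_of_pos (by positivity)
  have hGb : ∀ i : ℕ, (0:ℝ) < Gamma (i + b) :=
    fun i => Gamma_pos_of_pos (by positivity)
  -- telescoping identity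
  have htel : ∀ i : ℕ, f i - f (i + 1) = c * (Gamma (i + a) / Gamma (i + b)) := by
    intro i
    have hia : (0:ℝ) < (i : ℝ) + a := by positivity
    have hib1 : (0:ℝ) < (i : ℝ) + b - 1 := by linarith [Nat.cast_nonneg (α := ℝ) i]
    have h1 : Gamma ((i + 1 : ℕ) + a) = ((i:ℝ) + a) * Gamma (i + a) := by
      push_cast
      rw [show (i:ℝ) + 1 + a = ((i:ℝ) + a) + 1 by ring, Gamma_add_one hia.ne']
    have h2 : Gamma ((i:ℝ) + b) = ((i:ℝ) + b - 1) * Gamma ((i:ℝ) + b - 1) := by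
      have h2' := Gamma_add_one hib1.ne'
      rw [show (i:ℝ) + b - 1 + 1 = (i:ℝ) + b by ring] at h2'
      exact h2'
    have h3 : Gamma ((i + 1 : ℕ) + b - 1) = Gamma ((i:ℝ) + b) := by push_cast; ring_nf
    simp only [hf_def]
    rw [h1, h3, h2]
    have hG := (hGb1 i).ne'
    field_simp
    ring
  -- partial sums
  have hps : ∀ n : ℕ, ∑ i ∈ Finset.range n, Gamma (i + a) / Gamma (i + b)
      = (f 0 - f n) / c := by
    intro n
    rw [← Finset.sum_range_sub' f n]
    rw [eq_div_iff hc.ne', Finset.sum_mul]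
    exact Finset.sum_congr rfl fun i _ => by rw [htel i]; ring
  -- limit of f
  have hf0 : f 0 = Gamma a / Gamma (b - 1) := by
    simp only [hf_def]
    norm_num
  have hflim : Tendsto f atTop (𝓝 0) := by
    have := gamma_ratio_tendsto_zero ha hc
    refine this.congr fun i => ?_
    simp only [hf_def, hc_def]
    ring_nf
  rw [hasSum_iff_tendsto_nat_of_nonneg
    (fun i => div_nonneg (hGa i).le (hGb i).le)]
  have : Tendsto (fun n => (f 0 - f n) / c) atTop
      (𝓝 ((f 0 - 0) / c)) := (tendsto_const_nhds.sub hflim).div_const c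
  rw [sub_zero] at this
  have h2' := this.congr fun n => (hps n).symm
  have heq : (1 / c) * (Gamma a / Gamma (b - 1)) = f 0 / c := by rw [hf0]; ring
  rw [heq]
  exact h2'
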